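/- arXiv:math/0302223 — 2 statements merged into one kernel-verified Lean document; each statement's English description precedes it below -/
import Mathlib

section
/- Let S be the additive submonoid of ℚ generated by the set {n + 1 + 1/2ⁿ : n ∈ ℕ, n ≥ 0}. If q ∈ ℚ is such that q + s ∈ S for every nonzero s ∈ S, then q ∈ S. -/
private lemma not_int_add_half {A : ℚ} (hA : ∃ z : ℤ, A = z) :
    ¬ ∃ w : ℤ, A + 1/2 = (w : ℚ) := by
  rintro ⟨w, hw⟩
  obtain ⟨z, rfl⟩ := hA
  have h2 : ((2 * (w - z) : ℤ) : ℚ) = 1 := by push_cast; linarith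
  have h3 : (2 * (w - z) : ℤ) = 1 := by exact_mod_cast h2
  omega

private lemma S_nonneg (S : AddSubmonoid ℚ)
    (hS : S = AddSubmonoid.closure {q : ℚ | ∃ n : ℕ, q = n + 1 + 1 / 2 ^ n}) :
    ∀ x ∈ S, 0 ≤ x := by
  subst hS
  intro x hx
  induction hx using AddSubmonoid.closure_induction with
  | mem y hy => obtain ⟨n, rfl⟩ := hy; positivity
  | zero => exact le_refl 0
  | add x y hx hy ihx ihy => linarith

private lemma S_dyadic (S : AddSubmonoid ℚ)
    (hS : S = AddSubmonoid.closure {q : ℚ | ∃ n : ℕ, q = n + 1 + 1 / 2 ^ n}) :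
    ∀ x ∈ S, ∃ k : ℕ, ∃ z : ℤ, (2:ℚ)^k * x = z := by
  subst hS
  intro x hx
  induction hx using AddSubmonoid.closure_induction with
  | mem y hy =>
      obtain ⟨n, rfl⟩ := hy
      refine ⟨n, 2^n * (n+1) + 1, ?_⟩
      have h : (2:ℚ)^n ≠ 0 := by positivity
      push_cast
      field_simp
  | zero => exact ⟨0, 0, by simp⟩
  | add x y hx hy ihx ihy =>
      obtain ⟨k1, z1, h1⟩ := ihx
      obtain ⟨k2, z2, h2⟩ := ihy
      refine ⟨k1 + k2, 2^k2 * z1 + 2^k1 * z2, ?_⟩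
      push_cast
      linear_combination (2:ℚ)^k2 * h1 + (2:ℚ)^k1 * h2

private lemma S_key (S : AddSubmonoid ℚ)
    (hS : S = AddSubmonoid.closure {q : ℚ | ∃ n : ℕ, q = n + 1 + 1 / 2 ^ n}) :
    ∀ x ∈ S, ∀ j : ℕ, (¬ ∃ z : ℤ, (2:ℚ)^j * x = z) →
      ∃ m : ℕ, j < m ∧ ∃ r ∈ S, x = ((m:ℚ) + 1 + 1/2^m) + r := by
  intro x hxS
  rw [hS] at hxS
  induction hxS using AddSubmonoid.closure_induction with
  | mem y hy =>
      intro j hj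
      obtain ⟨n, rfl⟩ := hy
      refine ⟨n, ?_, 0, by rw [hS]; exact AddSubmonoid.zero_mem _, by ring⟩
      by_contra hle
      push_neg at hle  -- n ≤ j
      apply hj
      refine ⟨2^j * (n+1) + 2^(j-n), ?_⟩
      have h2 : (2:ℚ)^j = 2^(j-n) * 2^n := by
        rw [← pow_add]; congr 1; omega
      have hn0 : (2:ℚ)^n ≠ 0 := by positivity
      push_cast
      rw [h2]
      field_simp
  | zero =>
      intro j hj
      exact absurd ⟨0, by simp⟩ hj
  | add x y hx hy ihx ihy =>
      intro j hj
      by_cases hxz : ∃ z : ℤ, (2:ℚ)^j * x = z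
      · have hyz : ¬ ∃ z : ℤ, (2:ℚ)^j * y = z := by
          rintro ⟨zy, hzy⟩
          obtain ⟨zx, hzx⟩ := hxz
          exact hj ⟨zx + zy, by push_cast; rw [mul_add, hzx, hzy]⟩
        obtain ⟨m, hm, r, hrS, hr⟩ := ihy j hyz
        refine ⟨m, hm, r + x, ?_, by rw [hr]; ring⟩
        exact S.add_mem hrS (by rw [hS]; exact hx)
      · obtain ⟨m, hm, r, hrS, hr⟩ := ihx j hxz
        refine ⟨m, hm, r + y, ?_, by rw [hr]; ring⟩
        exact S.add_mem hrS (by rw [hS]; exact hy)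

/-- Let `S` be the additive submonoid of `ℚ` generated by `{n + 1 + 1/2ⁿ : n ∈ ℕ}`.
If `q ∈ ℚ` is such that `q + s ∈ S` for every nonzero `s ∈ S`, then `q ∈ S`. -/
theorem mem_of_add_mem_submonoid
    (S : AddSubmonoid ℚ)
    (hS : S = AddSubmonoid.closure {q : ℚ | ∃ n : ℕ, q = n + 1 + 1 / 2 ^ n})
    (q : ℚ) (hq : ∀ s ∈ S, s ≠ 0 → q + s ∈ S) :
    q ∈ S := by
  have h2S : (2:ℚ) ∈ S := by
    rw [hS]
    exact AddSubmonoid.subset_closure ⟨0, by norm_num⟩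
  have hq2 : q + 2 ∈ S := hq 2 h2S (by norm_num)
  obtain ⟨k, z, hkz⟩ := S_dyadic S hS _ hq2
  -- q times 2^j is an integer for j ≥ k
  have hint : ∀ j : ℕ, k ≤ j → ∃ w : ℤ, (2:ℚ)^j * q = w := by
    intro j hj
    refine ⟨2^(j-k) * (z - 2^(k+1)), ?_⟩
    have h2 : (2:ℚ)^j = 2^(j-k) * 2^k := by rw [← pow_add]; congr 1; omega
    push_cast
    rw [h2]
    linear_combination (2:ℚ)^(j-k) * hkz
  set n : ℕ := k + 1 + ⌈q⌉₊ with hn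
  have hqn : q ≤ (n:ℚ) := by
    calc q ≤ (⌈q⌉₊ : ℚ) := Nat.le_ceil q
    _ ≤ (n:ℚ) := by exact_mod_cast Nat.le_add_left _ _
  have hkn : k + 1 ≤ n := Nat.le_add_right _ _
  have haS : ((n:ℚ) + 1 + 1/2^n) ∈ S := by
    rw [hS]; exact AddSubmonoid.subset_closure ⟨n, rfl⟩
  have hxS : q + ((n:ℚ) + 1 + 1/2^n) ∈ S := hq _ haS (by positivity)
  -- 2^(n-1) times this is not an integer
  have hnotint : ¬ ∃ w : ℤ, (2:ℚ)^(n-1) * (q + ((n:ℚ) + 1 + 1/2^n)) = w := by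
    have heq : (2:ℚ)^(n-1) * (q + ((n:ℚ) + 1 + 1/2^n))
        = ((2:ℚ)^(n-1) * q + 2^(n-1) * ((n:ℚ)+1)) + 1/2 := by
      have h2 : (2:ℚ)^n = 2 * 2^(n-1) := by
        rw [← pow_succ']; congr 1; omega
      have hn0 : (2:ℚ)^(n-1) ≠ 0 := by positivity
      rw [h2]; field_simp; ring
    rw [heq]
    apply not_int_add_half
    obtain ⟨w, hw⟩ := hint (n-1) (by omega)
    refine ⟨w + 2^(n-1) * (n+1), ?_⟩
    push_cast
    linear_combination hw
  obtain ⟨m, hm, r, hrS, hr⟩ := S_key S hS _ hxS (n-1) hnotint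
  have hnm : n ≤ m := by omega
  rcases eq_or_lt_of_le hnm with heq | hlt
  · subst heq
    have hqeq : q = r := by linarith [hr]
    rwa [hqeq]
  · -- n < m : derive a contradiction
    exfalso
    -- r is not 2^(m-1)-integral
    have hrnotint : ¬ ∃ w : ℤ, (2:ℚ)^(m-1) * r = w := by
      have hreq : (2:ℚ)^(m-1) * r
          = ((2:ℚ)^(m-1) * q + 2^(m-1) * ((n:ℚ)+1) + 2^(m-1-n)
              - 2^(m-1) * ((m:ℚ)+1) - 1) + 1/2 := by
        have h2 : (2:ℚ)^m = 2 * 2^(m-1) := by rw [← pow_succ']; congr 1; omega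
        have h3 : (2:ℚ)^(m-1) = 2^(m-1-n) * 2^n := by rw [← pow_add]; congr 1; omega
        have hrval : r = q + ((n:ℚ)+1+1/2^n) - ((m:ℚ)+1+1/2^m) := by linarith [hr]
        have hn0 : (2:ℚ)^n ≠ 0 := by positivity
        have hc0 : (2:ℚ)^(m-1-n) ≠ 0 := by positivity
        rw [hrval, h2, h3]
        field_simp
        ring
      rw [hreq]
      apply not_int_add_half
      obtain ⟨w, hw⟩ := hint (m-1) (by omega)
      refine ⟨w + 2^(m-1) * (n+1) + 2^(m-1-n) - 2^(m-1) * (m+1) - 1, ?_⟩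
      push_cast
      linear_combination hw
    obtain ⟨m', hm', r', hr'S, hr'⟩ := S_key S hS _ hrS (m-1) hrnotint
    have h1 : (0:ℚ) ≤ r' := S_nonneg S hS _ hr'S
    have h2 : ((m:ℚ)) ≤ (m':ℚ) := by exact_mod_cast (by omega : m ≤ m')
    have h3 : (n:ℚ) + 1 ≤ (m:ℚ) := by exact_mod_cast (by omega : n + 1 ≤ m)
    -- r ≥ m' + 1 ≥ m + 1 ≥ n + 2, but r ≤ q ≤ n
    have hrbig : (n:ℚ) + 2 ≤ r := by
      have hstep : ((m':ℚ) + 1 + 1/2^m') ≤ r := by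
        rw [hr']; linarith [h1]
      have hp : (0:ℚ) ≤ 1/2^m' := by positivity
      linarith
    have hrsmall : r ≤ q := by
      have hp1 : (1:ℚ)/2^n ≤ 1 := by
        rw [div_le_one (by positivity)]; exact one_le_pow₀ (by norm_num)
      have hp2 : (0:ℚ) < 1/2^m := by positivity
      have hrval : r = q + ((n:ℚ)+1+1/2^n) - ((m:ℚ)+1+1/2^m) := by linarith [hr]
      rw [hrval]; linarith
    linarith
end

section
/- Let S be the additive submonoid of ℚ generated by the set {n + 1 + 1/2ⁿ : n ∈ ℕ, n ≥ 0}. Then for every q ∈ ℚ there exists a natural number N such that for all natural numbers n ≥ N, q + 1/2ⁿ ∉ S. -/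
lemma mem_S_struct {s : ℚ}
    (hs : s ∈ AddSubmonoid.closure {q : ℚ | ∃ n : ℕ, q = n + 1 + 1 / 2 ^ n}) :
    ∃ (A : ℕ) (z : ℤ), (A : ℚ) ≤ s ∧ s * 2 ^ A = z := by
  induction hs using AddSubmonoid.closure_induction with
  | mem x hx =>
    obtain ⟨n, rfl⟩ := hx
    refine ⟨n + 1, (n + 1) * 2 ^ (n + 1) + 2, ?_, ?_⟩
    · have : (0:ℚ) ≤ 1 / 2 ^ n := by positivity
      push_cast
      linarith
    · have h2 : (2:ℚ) ^ n ≠ 0 := by positivity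
      push_cast
      field_simp
      ring
  | zero => exact ⟨0, 0, by norm_num, by norm_num⟩
  | add s t _ _ ihs iht =>
    obtain ⟨A, z, hA, hz⟩ := ihs
    obtain ⟨B, w, hB, hw⟩ := iht
    refine ⟨A + B, z * 2 ^ B + w * 2 ^ A, ?_, ?_⟩
    · push_cast; linarith
    · push_cast
      have h : (s + t) * 2 ^ (A + B) = (s * 2 ^ A) * 2 ^ B + (t * 2 ^ B) * 2 ^ A := by
        rw [pow_add]; ring
      rw [h, hz, hw]

/-- Let `S` be the additive submonoid of `ℚ` generated by `{n + 1 + 1/2ⁿ : n ∈ ℕ}`.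
Then for every `q ∈ ℚ` there is `N ∈ ℕ` such that `q + 1/2ⁿ ∉ S` for all `n ≥ N`. -/
theorem eventually_add_inv_pow_two_not_mem
    (S : AddSubmonoid ℚ)
    (hS : S = AddSubmonoid.closure {q : ℚ | ∃ n : ℕ, q = n + 1 + 1 / 2 ^ n})
    (q : ℚ) :
    ∃ N : ℕ, ∀ n : ℕ, N ≤ n → q + 1 / 2 ^ n ∉ S := by
  subst hS
  refine ⟨max q.den (⌈q⌉.toNat + 2), fun n hn hmem => ?_⟩
  obtain ⟨A, z, hA, hz⟩ := mem_S_struct hmem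
  have h2n : (0:ℚ) < 2 ^ n := by positivity
  have hA_lt : A < n := by
    have h1 : (1:ℚ)/2^n ≤ 1 := by
      rw [div_le_one h2n]; exact one_le_pow₀ (by norm_num)
    have hq1 : (A:ℚ) ≤ q + 1 := le_trans hA (by linarith)
    have hq2 : q ≤ (⌈q⌉ : ℚ) := Int.le_ceil q
    have hq3 : (⌈q⌉ : ℚ) ≤ (⌈q⌉.toNat : ℚ) := by exact_mod_cast Int.self_le_toNat ⌈q⌉
    have : (A:ℚ) < ((⌈q⌉.toNat + 2 : ℕ) : ℚ) := by push_cast; linarith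
    have hAn : A < ⌈q⌉.toNat + 2 := by exact_mod_cast this
    omega
  -- key identity
  have key : q * 2 ^ n = ((z * 2 ^ (n - A) - 1 : ℤ) : ℚ) := by
    have h2 : (2:ℚ) ^ n = 2 ^ A * 2 ^ (n - A) := by
      rw [← pow_add, Nat.add_sub_cancel' hA_lt.le]
    have h3 : q * 2 ^ n = (q + 1 / 2 ^ n) * 2 ^ n - 1 := by field_simp; ring
    have h4 : (q + 1 / 2 ^ n) * 2 ^ n = ((q + 1 / 2 ^ n) * 2 ^ A) * 2 ^ (n - A) := by
      rw [mul_assoc, ← pow_add, Nat.add_sub_cancel' hA_lt.le]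
    rw [h3, h4, hz]
    push_cast
    ring
  set w : ℤ := z * 2 ^ (n - A) - 1 with hw
  -- q.den divides 2^n
  have hqeq : q = (w : ℚ) / (((2:ℤ) ^ n : ℤ) : ℚ) := by
    rw [eq_div_iff (by push_cast; positivity)]
    push_cast
    exact key
  have hden : q.den ∣ 2 ^ n := by
    have h := Rat.den_dvd w ((2:ℤ) ^ n)
    rw [Rat.divInt_eq_div, ← hqeq] at h
    exact_mod_cast h
  obtain ⟨j, hj_le, hjden⟩ := (Nat.dvd_prime_pow Nat.prime_two).mp hden
  have hjn : j < n := by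
    have h1 : j < 2 ^ j := Nat.lt_two_pow_self (n := j)
    have h2 : q.den ≤ n := le_trans (le_max_left _ _) hn
    omega
  have hwnum : w = q.num * 2 ^ (n - j) := by
    have hq : (q.num : ℚ) = q * q.den := by
      rw [Rat.mul_den_eq_num]
    have : (w : ℚ) = (q.num : ℚ) * 2 ^ (n - j) := by
      rw [← key, hq, hjden]
      push_cast
      rw [mul_assoc, ← pow_add, Nat.add_sub_cancel' hjn.le]
    exact_mod_cast this
  have e1 : (2:ℤ) ∣ z * 2 ^ (n - A) := Dvd.dvd.mul_left (dvd_pow_self 2 (by omega)) z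
  have e2 : (2:ℤ) ∣ q.num * 2 ^ (n - j) := Dvd.dvd.mul_left (dvd_pow_self 2 (by omega)) q.num
  omega
end
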